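/- Let φ ∈ L²(ℝ², ℍ) be a nonzero quaternion window function and f ∈ L²(ℝ², ℍ) with x_k f ∈ L²(ℝ², ℍ) for a fixed k ∈ {1,2}. Then ∥φ∥₂² · ∫_{ℝ²} x_k² |f(x)|² dx = ∫_{ℝ²} ∫_{ℝ²} x_k² |f(x) (φ(x − b))̄ |² dx db, where f(x)(φ(x−b))̄ is the inverse two-sided QFT (in the variable x) of G_φ f(·, b). -/

import Mathlib

open MeasureTheory Real
open Convolution

noncomputable section

/-- The quaternion exponential `e^{iθ} = cos θ + i sin θ`. -/
def expI (θ : ℝ) : Quaternion ℝ := ⟨Real.cos θ, Real.sin θ, 0, 0⟩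

/-- The quaternion exponential `e^{jθ} = cos θ + j sin θ`. -/
def expJ (θ : ℝ) : Quaternion ℝ := ⟨Real.cos θ, 0, Real.sin θ, 0⟩

/-- The two-sided quaternionic Fourier transform
`F_q f (ω) = ∫ e^{-2π i x₁ ω₁} f(x) e^{-2π j x₂ ω₂} dx`. -/
def QFT (f : ℝ × ℝ → Quaternion ℝ) (ω : ℝ × ℝ) : Quaternion ℝ :=
  ∫ x : ℝ × ℝ, expI (-(2 * π * x.1 * ω.1)) * f x * expJ (-(2 * π * x.2 * ω.2))

/-- The two-sided Gabor quaternionic Fourier transform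
`G_φ f (ω, b) = ∫ e^{-2π i x₁ ω₁} f(x) conj(φ(x - b)) e^{-2π j x₂ ω₂} dx`. -/
def GQFT (φ f : ℝ × ℝ → Quaternion ℝ) (ω b : ℝ × ℝ) : Quaternion ℝ :=
  ∫ x : ℝ × ℝ,
    expI (-(2 * π * x.1 * ω.1)) * (f x * star (φ (x - b))) * expJ (-(2 * π * x.2 * ω.2))

/-- The `k`-th coordinate of a point of `ℝ²`. -/
def coord : Fin 2 → ℝ × ℝ → ℝ
  | 0 => Prod.fst
  | 1 => Prod.snd

/-- The `k`-th standard basis direction of `ℝ²`. -/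
def dirv : Fin 2 → ℝ × ℝ
  | 0 => (1, 0)
  | 1 => (0, 1)

/-- The Euclidean norm on `ℝ²`. -/
def euclNorm (x : ℝ × ℝ) : ℝ := Real.sqrt (x.1 ^ 2 + x.2 ^ 2)

/-- `‖φ‖₂² ∫ x_k² |f(x)|² dx = ∫∫ x_k² |f(x) conj(φ(x-b))|² dx db`, where
`f(x) conj(φ(x-b))` is the inverse two-sided QFT in `x` of `G_φ f(·, b)`. -/
theorem gqft_moment_identity (φ f : ℝ × ℝ → Quaternion ℝ)
    (hφ : MemLp φ 2 volume) (hφ0 : φ ≠ 0) (hf : MemLp f 2 volume) (k : Fin 2)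
    (hxf : MemLp (fun x : ℝ × ℝ => coord k x • f x) 2 volume) :
    (∫ x : ℝ × ℝ, ‖φ x‖ ^ 2) * ∫ x : ℝ × ℝ, coord k x ^ 2 * ‖f x‖ ^ 2 =
      ∫ b : ℝ × ℝ, ∫ x : ℝ × ℝ, coord k x ^ 2 * ‖f x * star (φ (x - b))‖ ^ 2 := by
  set g : ℝ × ℝ → ℝ := fun x => coord k x ^ 2 * ‖f x‖ ^ 2 with hgdef
  set h : ℝ × ℝ → ℝ := fun x => ‖φ (-x)‖ ^ 2 with hhdef
  have hφ2 : Integrable (fun x : ℝ × ℝ => ‖φ x‖ ^ 2) volume := by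
    have := hφ.integrable_norm_rpow (by norm_num) (by norm_num)
    refine this.congr (ae_of_all _ fun x => ?_)
    norm_num [Real.rpow_natCast]
  have hg : Integrable g volume := by
    have := hxf.integrable_norm_rpow (by norm_num) (by norm_num)
    refine this.congr (ae_of_all _ fun x => ?_)
    simp only [hgdef, norm_smul, Real.norm_eq_abs]
    rw [ENNReal.toReal_ofNat, Real.rpow_two, mul_pow, sq_abs]
  have hh : Integrable h volume := hφ2.comp_neg
  have key := integral_convolution (ContinuousLinearMap.mul ℝ ℝ) (μ := volume) (ν := volume) hg hh
  have hconv : ∀ b : ℝ × ℝ, (g ⋆[ContinuousLinearMap.mul ℝ ℝ, volume] h) b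
      = ∫ x : ℝ × ℝ, coord k x ^ 2 * ‖f x * star (φ (x - b))‖ ^ 2 := by
    intro b
    simp only [convolution_def, ContinuousLinearMap.mul_apply']
    congr 1
    ext x
    simp only [hgdef, hhdef, neg_sub, norm_mul, norm_star, mul_pow]
    ring
  rw [show (∫ b : ℝ × ℝ, ∫ x : ℝ × ℝ, coord k x ^ 2 * ‖f x * star (φ (x - b))‖ ^ 2)
      = ∫ b : ℝ × ℝ, (g ⋆[ContinuousLinearMap.mul ℝ ℝ, volume] h) b from by
      simp_rw [hconv], key, ContinuousLinearMap.mul_apply']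
  rw [show (∫ x : ℝ × ℝ, h x) = ∫ x : ℝ × ℝ, ‖φ x‖ ^ 2 from by
      simp only [hhdef]; exact integral_neg_eq_self (fun x => ‖φ x‖ ^ 2) volume]
  ring
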